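/- Fix 0 < μ < v̄. The infimum, over posted prices v₁ ∈ [0, v̄], of the worst-case regret sup_{F ∈ 𝓕_=μ} ( OPT(F) − v₁·F([v₁, v̄]) ) equals ( μ − v̄ + √( (v̄ − μ)(3μ + v̄) ) )/2, and it is attained at the price v₁ = v̄·( μ + v̄ − √( (v̄ − μ)(3μ + v̄) ) ) / (2μ). -/

import Mathlib

open MeasureTheory Set

noncomputable section

/-- Hindsight optimal revenue: `OPT(F) = sup_{p ∈ [0, v̄]} p · F([p, v̄])`. -/
def hindsightOpt (vbar : ℝ) (F : Measure ℝ) : ℝ :=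
  ⨆ p : Icc (0 : ℝ) vbar, (p : ℝ) * (F (Icc (p : ℝ) vbar)).toReal

/-- The exact-mean ambiguity set: probability measures on `[0, v̄]` with mean exactly `μ`. -/
def FmeanEq (μ vbar : ℝ) : Set (Measure ℝ) :=
  {F | IsProbabilityMeasure F ∧ F (Icc (0 : ℝ) vbar) = 1 ∧ ∫ t, t ∂F = μ}

/-- Worst-case regret of posting price `v1` over the exact-mean ambiguity set. -/
def worstRegret (μ vbar v1 : ℝ) : ℝ :=
  ⨆ F : ↥(FmeanEq μ vbar), (hindsightOpt vbar F.1 - v1 * (F.1 (Icc v1 vbar)).toReal)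

/-! ### Auxiliary lemmas -/

lemma mrAeMem {vbar : ℝ} (F : Measure ℝ) [IsProbabilityMeasure F]
    (h1 : F (Icc (0:ℝ) vbar) = 1) : ∀ᵐ x ∂F, x ∈ Icc (0:ℝ) vbar := by
  have h : F (Icc (0:ℝ) vbar)ᶜ = 0 := by
    rw [measure_compl measurableSet_Icc (measure_ne_top _ _), h1]; simp
  exact ae_iff.2 (show F {x | ¬ x ∈ Icc (0:ℝ) vbar} = 0 by simpa [compl_def] using h)

lemma mrIntegrable {vbar : ℝ} (F : Measure ℝ) [IsProbabilityMeasure F]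
    (h1 : F (Icc (0:ℝ) vbar) = 1) : Integrable (fun t : ℝ => t) F := by
  refine Integrable.mono' (integrable_const vbar) measurable_id.aestronglyMeasurable ?_
  filter_upwards [mrAeMem F h1] with x hx
  rw [Real.norm_eq_abs, abs_le]
  exact ⟨(neg_nonpos.mpr (le_trans hx.1 hx.2)).trans hx.1, hx.2⟩

/-- Markov inequality: `p · F([p, v̄]) ≤ ∫ t`. -/
lemma mrMarkov {vbar : ℝ} (F : Measure ℝ) [IsProbabilityMeasure F]
    (h1 : F (Icc (0:ℝ) vbar) = 1) (p : ℝ) :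
    p * (F (Icc p vbar)).toReal ≤ ∫ t, t ∂F := by
  have hint := mrIntegrable F h1
  have h2 : ∫ _ in Icc p vbar, p ∂F ≤ ∫ t in Icc p vbar, t ∂F :=
    setIntegral_mono_on (integrableOn_const (measure_ne_top _ _))
      hint.integrableOn measurableSet_Icc (fun x hx => hx.1)
  have h3 : ∫ t in Icc p vbar, t ∂F ≤ ∫ t, t ∂F := by
    refine setIntegral_le_integral hint ?_
    filter_upwards [mrAeMem F h1] with x hx using hx.1
  have h4 : ∫ _ in Icc p vbar, p ∂F = (F (Icc p vbar)).toReal * p := by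
    rw [setIntegral_const]; rfl
  calc p * (F (Icc p vbar)).toReal = ∫ _ in Icc p vbar, p ∂F := by rw [h4]; ring
    _ ≤ _ := le_trans h2 h3

/-- Mean upper bound via a step function dominating the identity. -/
lemma mrMeanUpper {vbar : ℝ} (F : Measure ℝ) [IsProbabilityMeasure F]
    (h1 : F (Icc (0:ℝ) vbar) = 1)
    (p v1 : ℝ) (hpv : p ≤ v1) (hv : v1 ≤ vbar) :
    ∫ t, t ∂F ≤ p + (v1 - p) * (F (Icc p vbar)).toReal
      + (vbar - v1) * (F (Icc v1 vbar)).toReal := by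
  set g : ℝ → ℝ := fun x => p + (Icc p vbar).indicator (fun _ => v1 - p) x
      + (Icc v1 vbar).indicator (fun _ => vbar - v1) x with hg
  have hint1 : Integrable ((Icc p vbar).indicator (fun _ => v1 - p)) F :=
    (integrable_const (v1 - p)).indicator measurableSet_Icc
  have hint2 : Integrable ((Icc v1 vbar).indicator (fun _ => vbar - v1)) F :=
    (integrable_const (vbar - v1)).indicator measurableSet_Icc
  have hintg : Integrable g F := ((integrable_const p).add hint1).add hint2
  have hle : ∀ᵐ x ∂F, x ≤ g x := by
    filter_upwards [mrAeMem F h1] with x hx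
    simp only [hg]
    by_cases h2 : v1 ≤ x
    · rw [indicator_of_mem (mem_Icc.mpr ⟨le_trans hpv h2, hx.2⟩),
        indicator_of_mem (mem_Icc.mpr ⟨h2, hx.2⟩)]
      linarith [hx.2]
    · push_neg at h2
      by_cases h3 : p ≤ x
      · rw [indicator_of_mem (mem_Icc.mpr ⟨h3, hx.2⟩),
          indicator_of_notMem (fun hc => absurd hc.1 (not_le.2 h2))]
        linarith
      · push_neg at h3
        rw [indicator_of_notMem (fun hc => absurd hc.1 (not_le.2 h3)),
          indicator_of_notMem (fun hc => absurd hc.1 (not_le.2 (lt_of_lt_of_le h3 hpv)))]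
        linarith
  calc ∫ t, t ∂F ≤ ∫ t, g t ∂F := integral_mono_ae (mrIntegrable F h1) hintg hle
    _ = p + (v1 - p) * (F (Icc p vbar)).toReal + (vbar - v1) * (F (Icc v1 vbar)).toReal := by
        show (∫ x, ((p + (Icc p vbar).indicator (fun _ => v1 - p) x)
          + (Icc v1 vbar).indicator (fun _ => vbar - v1) x) ∂F) = _
        rw [integral_add (f := fun x => p + (Icc p vbar).indicator (fun _ => v1 - p) x)
            (g := (Icc v1 vbar).indicator fun _ => vbar - v1) ((integrable_const p).add hint1) hint2,
          integral_add (f := fun _ => p) (g := (Icc p vbar).indicator fun _ => v1 - p)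
            (integrable_const p) hint1,
          integral_const, integral_indicator_const _ measurableSet_Icc,
          integral_indicator_const _ measurableSet_Icc]
        simp [measure_univ, mul_comm]
        rfl

lemma mrHindsightLe {vbar : ℝ} (hv : 0 ≤ vbar) (F : Measure ℝ) (c : ℝ)
    (h : ∀ p ∈ Icc (0:ℝ) vbar, p * (F (Icc p vbar)).toReal ≤ c) :
    hindsightOpt vbar F ≤ c := by
  have : Nonempty (Icc (0:ℝ) vbar) := ⟨⟨0, le_refl _, hv⟩⟩
  exact ciSup_le fun p => h p p.2

lemma mrBddTerms {vbar : ℝ} (F : Measure ℝ) [IsProbabilityMeasure F] :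
    BddAbove (range fun p : Icc (0:ℝ) vbar => (p : ℝ) * (F (Icc (p : ℝ) vbar)).toReal) := by
  refine ⟨vbar, ?_⟩
  rintro x ⟨p, rfl⟩
  have h1 : (F (Icc (p : ℝ) vbar)).toReal ≤ 1 := by
    have := prob_le_one (μ := F) (s := Icc (p:ℝ) vbar)
    simpa using ENNReal.toReal_le_of_le_ofReal one_pos.le (by simpa using this)
  calc (p : ℝ) * (F (Icc (p : ℝ) vbar)).toReal ≤ (p:ℝ) * 1 :=
        mul_le_mul_of_nonneg_left h1 p.2.1
    _ ≤ vbar := by rw [mul_one]; exact p.2.2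

lemma mrHindsightGe {vbar : ℝ} (F : Measure ℝ) [IsProbabilityMeasure F]
    (p : ℝ) (hp : p ∈ Icc (0:ℝ) vbar) :
    p * (F (Icc p vbar)).toReal ≤ hindsightOpt vbar F :=
  le_ciSup (mrBddTerms F) ⟨p, hp⟩

/-- A two-point measure with mass `1-q` at `a` and `q` at `b`. -/
def twoPt (a b q : ℝ) : Measure ℝ :=
  ENNReal.ofReal (1 - q) • Measure.dirac a + ENNReal.ofReal q • Measure.dirac b

lemma twoPt_prob {a b q : ℝ} (hq0 : 0 ≤ q) (hq1 : q ≤ 1) :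
    IsProbabilityMeasure (twoPt a b q) := by
  constructor
  rw [twoPt, Measure.add_apply, Measure.smul_apply, Measure.smul_apply]
  simp [← ENNReal.ofReal_add (by linarith : (0:ℝ) ≤ 1 - q) hq0]

open scoped Classical in
lemma twoPt_apply {a b q : ℝ} (hq0 : 0 ≤ q) (hq1 : q ≤ 1) (s : Set ℝ) (hs : MeasurableSet s) :
    ((twoPt a b q) s).toReal
      = (if a ∈ s then 1 - q else 0) + (if b ∈ s then q else 0) := by
  classical
  rw [twoPt, Measure.add_apply, Measure.smul_apply, Measure.smul_apply,
    Measure.dirac_apply' _ hs, Measure.dirac_apply' _ hs]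
  by_cases ha : a ∈ s <;> by_cases hb : b ∈ s <;>
    simp [indicator_of_mem, indicator_of_notMem, ha, hb,
      ENNReal.toReal_add, ENNReal.toReal_ofReal, hq0, (by linarith : (0:ℝ) ≤ 1 - q)]

lemma twoPt_integral {a b q : ℝ} (hq0 : 0 ≤ q) (hq1 : q ≤ 1) :
    ∫ t, t ∂(twoPt a b q) = (1 - q) * a + q * b := by
  have h1 : Integrable (fun t : ℝ => t) (Measure.dirac a) :=
    ⟨measurable_id.aestronglyMeasurable, by simp [HasFiniteIntegral, lintegral_dirac]⟩
  have h2 : Integrable (fun t : ℝ => t) (Measure.dirac b) :=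
    ⟨measurable_id.aestronglyMeasurable, by simp [HasFiniteIntegral, lintegral_dirac]⟩
  rw [twoPt, integral_add_measure (h1.smul_measure ENNReal.ofReal_ne_top)
      (h2.smul_measure ENNReal.ofReal_ne_top)]
  rw [integral_smul_measure, integral_smul_measure, integral_dirac, integral_dirac]
  simp [ENNReal.toReal_ofReal hq0, ENNReal.toReal_ofReal (by linarith : (0:ℝ) ≤ 1 - q)]

lemma twoPt_mem {μR vbar a b q : ℝ} (ha : a ∈ Icc (0:ℝ) vbar) (hb : b ∈ Icc (0:ℝ) vbar)
    (hq0 : 0 ≤ q) (hq1 : q ≤ 1) (hmean : (1 - q) * a + q * b = μR) :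
    twoPt a b q ∈ FmeanEq μR vbar := by
  refine ⟨twoPt_prob hq0 hq1, ?_, by rw [twoPt_integral hq0 hq1, hmean]⟩
  rw [twoPt, Measure.add_apply, Measure.smul_apply, Measure.smul_apply,
    Measure.dirac_apply' _ measurableSet_Icc, Measure.dirac_apply' _ measurableSet_Icc,
    indicator_of_mem ha, indicator_of_mem hb]
  simp [← ENNReal.ofReal_add (by linarith : (0:ℝ) ≤ 1 - q) hq0]

lemma mrRegretBdd {μR vbar v1 : ℝ} (hv : 0 ≤ vbar) (hv1 : 0 ≤ v1) :
    BddAbove (range fun F : ↥(FmeanEq μR vbar) =>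
      hindsightOpt vbar F.1 - v1 * (F.1 (Icc v1 vbar)).toReal) := by
  refine ⟨μR, ?_⟩
  rintro x ⟨F, rfl⟩
  obtain ⟨hP, hIcc, hmean⟩ := F.2
  haveI := hP
  have h1 : hindsightOpt vbar F.1 ≤ μR := by
    refine mrHindsightLe hv _ _ fun p hp => ?_
    calc p * (F.1 (Icc p vbar)).toReal ≤ ∫ t, t ∂F.1 := mrMarkov F.1 hIcc p
      _ = μR := hmean
  have h2 : 0 ≤ v1 * (F.1 (Icc v1 vbar)).toReal :=
    mul_nonneg hv1 ENNReal.toReal_nonneg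
  dsimp only
  linarith

lemma mrWorstRegretGe {μR vbar v1 : ℝ} (hv : 0 ≤ vbar) (hv1 : 0 ≤ v1)
    (F : Measure ℝ) (hF : F ∈ FmeanEq μR vbar) :
    hindsightOpt vbar F - v1 * (F (Icc v1 vbar)).toReal ≤ worstRegret μR vbar v1 :=
  le_ciSup (mrRegretBdd hv hv1) (⟨F, hF⟩ : ↥(FmeanEq μR vbar))

set_option maxHeartbeats 2000000 in
/-- The minimax-regret posted price under the exact-mean ambiguity set is
`v₁ = v̄(μ + v̄ - √((v̄-μ)(3μ+v̄)))/(2μ)`, with optimal worst-case regret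
`(μ - v̄ + √((v̄-μ)(3μ+v̄)))/2`. -/
theorem stmt19 (μ vbar : ℝ) (hμ : 0 < μ) (hμv : μ < vbar)
    (v1s val : ℝ)
    (hv1s : v1s = vbar * (μ + vbar - Real.sqrt ((vbar - μ) * (3 * μ + vbar))) / (2 * μ))
    (hval : val = (μ - vbar + Real.sqrt ((vbar - μ) * (3 * μ + vbar))) / 2) :
    worstRegret μ vbar v1s = val ∧
    ∀ v1 ∈ Icc (0 : ℝ) vbar, val ≤ worstRegret μ vbar v1 := by
  set S := Real.sqrt ((vbar - μ) * (3 * μ + vbar)) with hS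
  have hvbar : (0:ℝ) < vbar := lt_trans hμ hμv
  -- algebraic facts
  have hSpos : 0 < S := by
    rw [hS]; exact Real.sqrt_pos.mpr (by nlinarith)
  have hSsq : S^2 = (vbar - μ) * (3*μ + vbar) := by
    rw [hS, Real.sq_sqrt (by nlinarith)]
  have hSlt : S < μ + vbar := by nlinarith [hSpos]
  have hv1spos : 0 < v1s := by
    rw [hv1s]; apply div_pos (by nlinarith) (by linarith)
  have hkey1 : val * vbar = μ * (vbar - v1s) := by
    rw [hval, hv1s]; field_simp; ring
  have hv1sμ : v1s < μ := by
    rw [hv1s, div_lt_iff₀ (by linarith)]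
    nlinarith [hSpos, hSsq, mul_pos hvbar hSpos,
      mul_pos (mul_pos hμ hμ) (mul_pos hμ (sub_pos.2 hμv))]
  have hkey2 : val * (vbar - v1s) = v1s * (vbar - μ) := by
    rw [hval, hv1s]
    field_simp
    linear_combination hSsq
  have hvalpos : 0 < val := by
    rw [hval]
    nlinarith [hSsq, hSpos, mul_pos (sub_pos.2 hμv) hμ]
  have hvalμ : val < μ := by nlinarith [hkey1]
  have hv1svbar : v1s < vbar := lt_trans hv1sμ hμv
  -- the uniform upper bound on regret at v1s
  have hupper : ∀ F : Measure ℝ, F ∈ FmeanEq μ vbar →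
      hindsightOpt vbar F - v1s * (F (Icc v1s vbar)).toReal ≤ val := by
    rintro F ⟨hP, hIcc, hmean⟩
    haveI := hP
    set t := (F (Icc v1s vbar)).toReal with ht
    have ht0 : 0 ≤ t := ENNReal.toReal_nonneg
    rw [sub_le_iff_le_add]
    refine mrHindsightLe hvbar.le _ _ fun p hp => ?_
    set s := (F (Icc p vbar)).toReal with hsdef
    have hs0 : 0 ≤ s := ENNReal.toReal_nonneg
    have hs1 : s ≤ 1 := by
      have := prob_le_one (μ := F) (s := Icc p vbar)
      simpa [hsdef] using ENNReal.toReal_le_of_le_ofReal one_pos.le (by simpa using this)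
    have hms : p * s ≤ μ := by
      calc p * s ≤ ∫ u, u ∂F := mrMarkov F hIcc p
        _ = μ := hmean
    have hst' : v1s ≤ p → s ≤ t := fun hc => by
      refine (ENNReal.toReal_le_toReal (measure_ne_top _ _) (measure_ne_top _ _)).mpr ?_
      exact measure_mono (Icc_subset_Icc_left hc)
    have hmean2' : p ≤ v1s → μ ≤ p + (v1s - p) * s + (vbar - v1s) * t := fun hc => by
      rw [← hmean]
      exact mrMeanUpper F hIcc p v1s hc hv1svbar.le
    clear_value s t
    by_cases hc : v1s ≤ p
    · -- p above the posted price
      have hst : s ≤ t := hst' hc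
      have hppos : 0 < p := lt_of_lt_of_le hv1spos hc
      have h2 : (p - v1s) * μ ≤ p * val := by
        nlinarith [hkey1, mul_nonneg (mul_nonneg hμ.le hv1spos.le) (sub_nonneg.2 hp.2)]
      have h1 : p * (p * s - v1s * s) ≤ (p - v1s) * μ := by nlinarith [hms]
      have h3 : p * s - v1s * s ≤ val := by
        have := le_trans h1 h2
        nlinarith [this, hppos]
      nlinarith [mul_le_mul_of_nonneg_left hst hv1spos.le]
    · -- p below the posted price
      push_neg at hc
      have hmean2 : μ ≤ p + (v1s - p) * s + (vbar - v1s) * t := hmean2' hc.le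
      have e1 : v1s * (μ - p - (v1s - p)*s) ≤ v1s * ((vbar - v1s) * t) :=
        mul_le_mul_of_nonneg_left (by linarith) hv1spos.le
      have e2 : v1s*(v1s - p)*s ≤ v1s*(v1s-p) := by
        nlinarith [mul_nonneg hv1spos.le (sub_nonneg.2 hc.le)]
      nlinarith [e1, e2, hkey2,
        mul_nonneg (mul_nonneg (sub_nonneg.2 hv1svbar.le) hp.1) (sub_nonneg.2 hs1),
        mul_nonneg (sub_nonneg.2 hv1svbar.le) (sub_nonneg.2 hc.le),
        sub_pos.2 hv1svbar]
  -- the extremal two-point measure at {0, vbar}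
  have hq0 : 0 ≤ μ / vbar := le_of_lt (div_pos hμ hvbar)
  have hq1 : μ / vbar ≤ 1 := by
    rw [div_le_one hvbar]; linarith
  have hFstar : twoPt 0 vbar (μ/vbar) ∈ FmeanEq μ vbar := by
    refine twoPt_mem ⟨le_refl _, hvbar.le⟩ ⟨hvbar.le, le_refl _⟩ hq0 hq1 ?_
    field_simp
    ring
  haveI hFstarP : IsProbabilityMeasure (twoPt 0 vbar (μ/vbar)) := twoPt_prob hq0 hq1
  have hOptStar : μ ≤ hindsightOpt vbar (twoPt 0 vbar (μ/vbar)) := by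
    have := mrHindsightGe (twoPt 0 vbar (μ/vbar)) vbar ⟨hvbar.le, le_refl _⟩
    have happ : ((twoPt 0 vbar (μ/vbar)) (Icc vbar vbar)).toReal = μ / vbar := by
      rw [twoPt_apply hq0 hq1 _ measurableSet_Icc]
      rw [if_neg (by simp [mem_Icc]; intro h; linarith), if_pos ⟨le_refl _, le_refl _⟩]
      ring
    rw [happ] at this
    calc μ = vbar * (μ / vbar) := by field_simp
      _ ≤ _ := this
  have hStarIcc : ∀ v1 : ℝ, 0 < v1 → v1 ≤ vbar →
      ((twoPt 0 vbar (μ/vbar)) (Icc v1 vbar)).toReal = μ / vbar := by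
    intro v1 h0 hle
    rw [twoPt_apply hq0 hq1 _ measurableSet_Icc]
    rw [if_neg (by simp [mem_Icc]; intro h; linarith), if_pos ⟨hle, le_refl _⟩]
    ring
  constructor
  · -- worstRegret μ vbar v1s = val
    have hne : Nonempty ↥(FmeanEq μ vbar) := ⟨⟨_, hFstar⟩⟩
    refine le_antisymm (ciSup_le fun F => hupper F.1 F.2) ?_
    have hterm : val ≤ hindsightOpt vbar (twoPt 0 vbar (μ/vbar))
        - v1s * ((twoPt 0 vbar (μ/vbar)) (Icc v1s vbar)).toReal := by
      rw [hStarIcc v1s hv1spos hv1svbar.le]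
      have : val = μ - v1s * (μ / vbar) := by
        field_simp
        linarith [hkey1]
      rw [this]
      linarith [hOptStar]
    exact le_trans hterm (mrWorstRegretGe hvbar.le hv1spos.le _ hFstar)
  · -- lower bound at every price
    rintro v1 ⟨hv10, hv1v⟩
    by_cases hcase1 : v1 ≤ v1s
    · -- use the {0, vbar} measure
      refine le_trans ?_ (mrWorstRegretGe hvbar.le hv10 _ hFstar)
      rcases eq_or_lt_of_le hv10 with h0 | h0
      · rw [← h0]
        simpa using le_trans hvalμ.le hOptStar
      · rw [hStarIcc v1 h0 hv1v]
        have h1 : v1 * (μ / vbar) ≤ v1s * (μ / vbar) :=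
          mul_le_mul_of_nonneg_right hcase1 hq0
        have h2 : val = μ - v1s * (μ / vbar) := by
          field_simp
          linarith [hkey1]
        linarith [hOptStar]
    · push_neg at hcase1
      by_cases hcase2 : v1 ≤ μ
      · -- two-point measure at {w, vbar} with w slightly below v1
        set δ := (v1 - v1s) * (vbar - μ + val) / (val + vbar) with hδ
        set w := v1 - δ with hw
        have hfac : 0 < vbar - μ + val := by linarith
        have hden : 0 < val + vbar := by linarith
        have hδpos : 0 < δ := by
          rw [hδ]; exact div_pos (mul_pos (by linarith) hfac) hden
        have hid : v1s * (vbar - μ + val) = val * vbar := by nlinarith [hkey2]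
        have hδdef : δ * (val + vbar) = (v1 - v1s) * (vbar - μ + val) := by
          rw [hδ]; field_simp
        have hδlt : δ < v1 := by
          nlinarith [hδdef, hid, mul_pos (lt_trans hv1spos hcase1) hμ, hden]
        have hw0 : 0 < w := by rw [hw]; linarith
        have hwv1 : w < v1 := by rw [hw]; linarith
        have hwμ : w < μ := lt_of_lt_of_le hwv1 hcase2
        have hwvbar : w < vbar := lt_trans hwμ hμv
        clear_value δ w
        have hvw0 : vbar - w ≠ 0 := ne_of_gt (by linarith)
        set t := (μ - w) / (vbar - w) with htdef
        have ht0 : 0 ≤ t := le_of_lt (div_pos (by linarith) (by linarith))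
        have ht1 : t ≤ 1 := by
          rw [htdef, div_le_one (by linarith)]; linarith
        have hmean : (1 - t) * w + t * vbar = μ := by
          rw [htdef]; field_simp; ring
        have hFw : twoPt w vbar t ∈ FmeanEq μ vbar := by
          exact twoPt_mem ⟨hw0.le, hwvbar.le⟩ ⟨hvbar.le, le_refl _⟩ ht0 ht1 hmean
        haveI : IsProbabilityMeasure (twoPt w vbar t) := twoPt_prob ht0 ht1
        have hOptw : w ≤ hindsightOpt vbar (twoPt w vbar t) := by
          have := mrHindsightGe (twoPt w vbar t) w ⟨hw0.le, hwvbar.le⟩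
          have happ : ((twoPt w vbar t) (Icc w vbar)).toReal = 1 := by
            rw [twoPt_apply ht0 ht1 _ measurableSet_Icc,
              if_pos ⟨le_refl _, hwvbar.le⟩, if_pos ⟨hwvbar.le, le_refl _⟩]
            ring
          rw [happ, mul_one] at this
          exact this
        have hIccw : ((twoPt w vbar t) (Icc v1 vbar)).toReal = t := by
          rw [twoPt_apply ht0 ht1 _ measurableSet_Icc,
            if_neg (by simp [mem_Icc]; intro h; linarith), if_pos ⟨hv1v, le_refl _⟩]
          ring
        -- key inequality: val ≤ w - v1 * t
        have hkeyineq : val ≤ w - v1 * t := by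
          have hvw : 0 < vbar - w := by linarith
          have hq : val * (vbar - w) ≤ w * (vbar - w) - v1 * (μ - w) := by
            have hcert : w * (vbar - w) - v1 * (μ - w) - val * (vbar - w)
                = δ * (v1 - δ) := by
              have : w = v1 - δ := hw
              rw [this]
              nlinarith [hδdef, hid]
            nlinarith [hcert, mul_nonneg hδpos.le (sub_nonneg.2 hδlt.le)]
          have hteq : v1 * t * (vbar - w) = v1 * (μ - w) := by
            rw [htdef]; field_simp
          have : val * (vbar - w) ≤ (w - v1 * t) * (vbar - w) := by nlinarith [hq, hteq]
          exact le_of_mul_le_mul_right (by linarith [this]) hvw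
        refine le_trans ?_ (mrWorstRegretGe hvbar.le hv10 _ hFw)
        rw [hIccw]
        linarith [hOptw]
      · -- v1 > μ : use the point mass at μ
        push_neg at hcase2
        have hFμ : twoPt μ vbar 0 ∈ FmeanEq μ vbar := by
          refine twoPt_mem ⟨hμ.le, hμv.le⟩ ⟨hvbar.le, le_refl _⟩ le_rfl zero_le_one ?_
          ring
        haveI : IsProbabilityMeasure (twoPt μ vbar 0) := twoPt_prob le_rfl zero_le_one
        have hOptμ : μ ≤ hindsightOpt vbar (twoPt μ vbar 0) := by
          have := mrHindsightGe (twoPt μ vbar 0) μ ⟨hμ.le, hμv.le⟩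
          have happ : ((twoPt μ vbar 0) (Icc μ vbar)).toReal = 1 := by
            rw [twoPt_apply le_rfl zero_le_one _ measurableSet_Icc,
              if_pos ⟨le_refl _, hμv.le⟩, if_pos ⟨hμv.le, le_refl _⟩]
            ring
          rw [happ, mul_one] at this
          exact this
        have hIccμ : ((twoPt μ vbar 0) (Icc v1 vbar)).toReal = 0 := by
          rw [twoPt_apply le_rfl zero_le_one _ measurableSet_Icc,
            if_neg (by simp [mem_Icc]; intro h; linarith), if_pos ⟨hv1v, le_refl _⟩]
          ring
        refine le_trans ?_ (mrWorstRegretGe hvbar.le hv10 _ hFμ)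
        rw [hIccμ]
        linarith [hOptμ]
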